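/- With notation as in the context, the map α : (Z/(p),+) → Aut(T,+,·) defined by α(μ) = α_μ, where α_μ(u₁,…,u_s,a₁,…,a_s) = (f₁^μ(u₁),…,f_s^μ(u_s), γ₁^μ·a₁,…, γ_s^μ·a_s), is a well-defined homomorphism of groups; in particular each α_μ is an automorphism of the left brace T. -/

import Mathlib

lemma pow_zmod_val_add {M : Type*} [Monoid M] {p : ℕ} [NeZero p] (g : M)
    (hg : orderOf g = p) (μ ν : ZMod p) :
    g ^ (μ + ν).val = g ^ μ.val * g ^ ν.val := by
  have h := pow_mod_orderOf (x := g) (n := μ.val + ν.val)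
  rw [hg] at h
  rw [ZMod.val_add, h, pow_add]

lemma comm_aux {G : Type*} [Group G] (f c : G) (g : ℕ) (h : f * c = c ^ g * f) :
    ∀ m a : ℕ, f ^ m * c ^ a = c ^ (g ^ m * a) * f ^ m := by
  have key : ∀ a : ℕ, f * c ^ a = c ^ (g * a) * f := by
    intro a
    induction a with
    | zero => simp
    | succ a ih =>
      rw [pow_succ, ← mul_assoc, ih, mul_assoc, h, ← mul_assoc, ← pow_add,
        Nat.mul_succ]
  intro m
  induction m with
  | zero => intro a; simp
  | succ m ih =>
    intro a
    have e : g ^ m * (g * a) = g ^ (m + 1) * a := by ring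
    rw [pow_succ, mul_assoc, key a, ← mul_assoc, ih (g * a), e, mul_assoc, ← pow_succ]

lemma nsmul_zmod_val_add {M : Type*} [AddMonoid M] {p : ℕ} [NeZero p] (g : M)
    (hg : addOrderOf g = p) (μ ν : ZMod p) :
    (μ + ν).val • g = μ.val • g + ν.val • g := by
  have h := mod_addOrderOf_nsmul (x := g) (n := μ.val + ν.val)
  rw [hg] at h
  rw [ZMod.val_add, h, add_nsmul]

lemma comm_aux_add {G : Type*} [AddGroup G] (f c : G) (g : ℕ) (h : f + c = g • c + f) :
    ∀ m a : ℕ, m • f + a • c = (g ^ m * a) • c + m • f := by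
  have key : ∀ a : ℕ, f + a • c = (g * a) • c + f := by
    intro a
    induction a with
    | zero => simp
    | succ a ih =>
      rw [succ_nsmul, ← add_assoc, ih, add_assoc, h, ← add_assoc, ← add_nsmul,
        Nat.mul_succ]
  intro m
  induction m with
  | zero => intro a; simp
  | succ m ih =>
    intro a
    have e : g ^ m * (g * a) = g ^ (m + 1) * a := by ring
    rw [succ_nsmul, add_assoc, key a, ← add_assoc, ih (g * a), e, add_assoc, ← succ_nsmul]


/-- `(Z/(p))^n`. -/
abbrev BraceVec (p n : ℕ) := Fin n → ZMod p

/-- The underlying set of the semidirect product `T = (Z/(p))^n ⋊ A`, where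
`n = n₁ + ⋯ + n_s`, `(Z/(p))^n = ∏ i, (Z/(p))^{n_i}` and `A = ∏ i, Z/(l i)`. -/
abbrev BraceT (p s : ℕ) (l nn : Fin s → ℕ) : Type :=
  ((i : Fin s) → BraceVec p (nn i)) × ((i : Fin s) → ZMod (l i))

/-- Multiplication of the semidirect product `T = (Z/(p))^n ⋊ A` via the action
`β_{(a₁,…,a_s)}(u₁,…,u_s) = (c₁^{a₁}(u₁),…,c_s^{a_s}(u_s))`; its addition is the
componentwise one. -/
def braceTmul {p s : ℕ} {l nn : Fin s → ℕ}
    (c : ∀ i : Fin s, AddAut (BraceVec p (nn i)))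
    (x y : BraceT p s l nn) : BraceT p s l nn :=
  (fun i => x.1 i + ((x.2 i).val • c i) (y.1 i), x.2 + y.2)

/-- The map `α : Z/(p) → Maps(T,T)`,
`α_μ(u₁,…,u_s,a₁,…,a_s) = (f₁^μ(u₁),…,f_s^μ(u_s), γ₁^μ·a₁,…, γ_s^μ·a_s)`. -/
def braceAlpha {p s : ℕ} {l nn : Fin s → ℕ}
    (f : ∀ i : Fin s, AddAut (BraceVec p (nn i)))
    (γ : ∀ i : Fin s, (ZMod (l i))ˣ)
    (μ : ZMod p) (x : BraceT p s l nn) : BraceT p s l nn :=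
  (fun i => (μ.val • f i) (x.1 i), fun i => ((γ i : ZMod (l i)) ^ μ.val) * x.2 i)

/-- the map `α : (Z/(p),+) → Aut(T,+,·)`, `μ ↦ α_μ`, is a well-defined
homomorphism of groups; in particular each `α_μ` is an automorphism of the left
brace `T`. -/
theorem braceAlpha_is_hom
    (p s : ℕ) (l nn : Fin s → ℕ)
    (c f : ∀ i : Fin s, AddAut (BraceVec p (nn i)))
    (γ : ∀ i : Fin s, (ZMod (l i))ˣ)
    (hp : p.Prime) (hl : ∀ i, 1 < l i)
    (hdiv : ∀ q : ℕ, q.Prime → q ∣ ∏ i, l i → p ∣ q - 1)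
    (hfo : ∀ i, addOrderOf (f i) = p)
    (hco : ∀ i, addOrderOf (c i) = l i)
    (hγo : ∀ i, orderOf (γ i) = p)
    (hcomm : ∀ i, f i + c i = ((γ i : ZMod (l i)).val) • c i + f i) :
    (∀ μ : ZMod p, Function.Bijective (braceAlpha f γ μ)) ∧
    (∀ (μ : ZMod p) (x y : BraceT p s l nn),
        braceAlpha f γ μ (x + y) = braceAlpha f γ μ x + braceAlpha f γ μ y) ∧
    (∀ (μ : ZMod p) (x y : BraceT p s l nn),
        braceAlpha f γ μ (braceTmul c x y) =
          braceTmul c (braceAlpha f γ μ x) (braceAlpha f γ μ y)) ∧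
    (braceAlpha (l := l) f γ (0 : ZMod p) = id) ∧
    (∀ μ ν : ZMod p,
        braceAlpha (l := l) f γ (μ + ν) = braceAlpha f γ μ ∘ braceAlpha f γ ν) := by
  
  haveI : NeZero p := ⟨hp.pos.ne'⟩
  haveI : ∀ i, NeZero (l i) := fun i => ⟨by have := hl i; omega⟩
  -- composition law
  have hγord : ∀ i, orderOf ((γ i : ZMod (l i))) = p := by
    intro i; rw [orderOf_units]; exact hγo i
  have hcomp : ∀ μ ν : ZMod p,
      braceAlpha (l := l) f γ (μ + ν) = braceAlpha f γ μ ∘ braceAlpha f γ ν := by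
    intro μ ν
    funext x
    refine Prod.ext ?_ ?_ <;> funext i
    · show ((μ + ν).val • f i) (x.1 i) = (μ.val • f i) ((ν.val • f i) (x.1 i))
      rw [nsmul_zmod_val_add (f i) (hfo i), AddAut.add_apply]
    · show ((γ i : ZMod (l i)) ^ (μ + ν).val) * x.2 i
        = ((γ i : ZMod (l i)) ^ μ.val) * (((γ i : ZMod (l i)) ^ ν.val) * x.2 i)
      rw [pow_zmod_val_add _ (hγord i), mul_assoc]
  -- identity
  have hid : braceAlpha (l := l) f γ (0 : ZMod p) = id := by
    funext x
    refine Prod.ext ?_ ?_ <;> funext i <;>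
      simp [braceAlpha, ZMod.val_zero]
  refine ⟨?_, ?_, ?_, hid, hcomp⟩
  · intro μ
    rw [Function.bijective_iff_has_inverse]
    refine ⟨braceAlpha f γ (-μ), ?_, ?_⟩
    · intro x
      have h := hcomp (-μ) μ
      rw [neg_add_cancel, hid] at h
      exact (congrFun h.symm x)
    · intro x
      have h := hcomp μ (-μ)
      rw [add_neg_cancel, hid] at h
      exact (congrFun h.symm x)
  · intro μ x y
    refine Prod.ext ?_ ?_ <;> funext i
    · show (μ.val • f i) (x.1 i + y.1 i)
        = (μ.val • f i) (x.1 i) + (μ.val • f i) (y.1 i)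
      exact map_add _ _ _
    · show ((γ i : ZMod (l i)) ^ μ.val) * (x.2 i + y.2 i)
        = ((γ i : ZMod (l i)) ^ μ.val) * x.2 i + ((γ i : ZMod (l i)) ^ μ.val) * y.2 i
      exact mul_add _ _ _
  · intro μ x y
    refine Prod.ext ?_ ?_ <;> funext i
    · show (μ.val • f i) (x.1 i + ((x.2 i).val • c i) (y.1 i))
        = (μ.val • f i) (x.1 i)
          + ((((γ i : ZMod (l i)) ^ μ.val * x.2 i).val) • c i) ((μ.val • f i) (y.1 i))
      rw [map_add]
      congr 1
      have hmod : ((γ i : ZMod (l i)).val ^ μ.val * (x.2 i).val : ℕ)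
          ≡ (((γ i : ZMod (l i)) ^ μ.val * x.2 i).val) [MOD l i] := by
        rw [← ZMod.natCast_eq_natCast_iff]
        push_cast
        simp [ZMod.natCast_val, ZMod.cast_id]
      have hc : (((γ i : ZMod (l i)) ^ μ.val * x.2 i).val) • (c i)
          = ((γ i : ZMod (l i)).val ^ μ.val * (x.2 i).val) • (c i) := by
        rw [nsmul_eq_nsmul_iff_modEq, hco i]
        exact hmod.symm
      have h := congrArg (fun (g : AddAut (BraceVec p (nn i))) => g (y.1 i))
        (comm_aux_add (f i) (c i) ((γ i : ZMod (l i)).val) (hcomm i) μ.val (x.2 i).val)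
      simp only [AddAut.add_apply] at h
      rw [hc]
      exact h
    · show ((γ i : ZMod (l i)) ^ μ.val) * (x.2 i + y.2 i)
        = ((γ i : ZMod (l i)) ^ μ.val) * x.2 i + ((γ i : ZMod (l i)) ^ μ.val) * y.2 i
      exact mul_add _ _ _
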